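/- There exists a constant C > 0 such that for every real δ > 0 and every real r ≥ 1, ∫₀^δ √(log((δ+1)√r/ε)) dε ≤ C · δ · max(log(1/δ), log r, 1). -/

import Mathlib

open MeasureTheory

section EntropyAux
open Set Real Filter Topology

lemma aux_tendsto_inv : Tendsto (fun n : ℕ => ((n:ℝ)+2)⁻¹) atTop (𝓝 0) :=
  tendsto_inv_atTop_zero.comp (tendsto_atTop_add_const_right _ 2 tendsto_natCast_atTop_atTop)

lemma aux_integrableOn_log_Ioc_one : IntegrableOn Real.log (Set.Ioc 0 1) := by
  apply integrableOn_Ioc_of_intervalIntegral_norm_bounded_left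
    (f := Real.log) (l := atTop) (a := fun n : ℕ => ((n:ℝ)+2)⁻¹) (I := 1) (b := 1)
  · intro n
    have hn : (0:ℝ) < ((n:ℝ)+2)⁻¹ := by positivity
    have h : (0:ℝ) ∉ Set.uIcc (((n:ℝ)+2)⁻¹) 1 := by
      rw [Set.uIcc_of_le (by rw [inv_le_one_iff₀]; right; linarith)]
      intro h; exact absurd h.1 (not_le.mpr hn)
    exact (intervalIntegrable_iff_integrableOn_Ioc_of_le
      (by rw [inv_le_one_iff₀]; right; linarith)).mp (intervalIntegral.intervalIntegrable_log h)
  · exact aux_tendsto_inv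
  · filter_upwards with n
    have hn : (0:ℝ) < ((n:ℝ)+2)⁻¹ := by positivity
    have hle : ((n:ℝ)+2)⁻¹ ≤ 1 := by rw [inv_le_one_iff₀]; right; linarith
    have hcongr : ∫ x in Set.Ioc (((n:ℝ)+2)⁻¹) 1, ‖Real.log x‖
        = ∫ x in Set.Ioc (((n:ℝ)+2)⁻¹) 1, (-Real.log x) := by
      apply setIntegral_congr_fun measurableSet_Ioc
      intro x hx
      simp only []
      rw [Real.norm_eq_abs, abs_of_nonpos (Real.log_nonpos (le_of_lt (hn.trans_le hx.1.le)) hx.2)]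
    rw [hcongr, integral_neg, ← intervalIntegral.integral_of_le hle]
    rw [integral_log]
    have h1 : ((n:ℝ)+2)⁻¹ * Real.log (((n:ℝ)+2)⁻¹) ≤ 0 :=
      mul_nonpos_of_nonneg_of_nonpos hn.le (Real.log_nonpos hn.le hle)
    simp only [Real.log_one]
    nlinarith


lemma aux_integrableOn_log_Ioc {δ : ℝ} (hδ : 0 < δ) : IntegrableOn Real.log (Set.Ioc 0 δ) := by
  rcases le_total δ 1 with h | h
  · exact aux_integrableOn_log_Ioc_one.mono_set (Set.Ioc_subset_Ioc_right h)
  · have h2 : IntegrableOn Real.log (Set.Ioc 1 δ) := by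
      exact (intervalIntegrable_iff_integrableOn_Ioc_of_le h).mp
        (intervalIntegral.intervalIntegrable_log
          (by rw [Set.uIcc_of_le h]; intro hc; norm_num at hc))
    have := aux_integrableOn_log_Ioc_one.union h2
    rwa [Set.Ioc_union_Ioc_eq_Ioc (by norm_num) h] at this

lemma aux_log_integral_lb {δ : ℝ} (hδ : 0 < δ) :
    δ * Real.log δ - δ ≤ ∫ x in Set.Ioo 0 δ, Real.log x := by
  set a : ℕ → ℝ := fun n => δ * ((n:ℝ)+2)⁻¹ with ha
  have hta : Tendsto a atTop (𝓝 0) := by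
    rw [show (0:ℝ) = δ * 0 by ring]
    exact tendsto_const_nhds.mul
      (tendsto_inv_atTop_zero.comp (tendsto_atTop_add_const_right _ 2 tendsto_natCast_atTop_atTop))
  have hcover : AECover (volume.restrict (Set.Ioo 0 δ)) atTop (fun n => Set.Ioc (a n) δ) :=
    aecover_Ioo_of_Ioc hta tendsto_const_nhds
  have hint : IntegrableOn Real.log (Set.Ioo 0 δ) :=
    (aux_integrableOn_log_Ioc hδ).mono_set Set.Ioo_subset_Ioc_self
  have htend := hcover.integral_tendsto_of_countably_generated hint
  refine ge_of_tendsto htend ?_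
  filter_upwards [hta.eventually_le_const (show (0:ℝ) < 1 by norm_num)] with n hn1
  have hn0 : (0:ℝ) < a n := by positivity
  have hnle : a n ≤ δ := by
    rw [ha]; simp only []
    nth_rewrite 2 [show δ = δ * 1 by ring]
    apply mul_le_mul_of_nonneg_left _ hδ.le
    rw [inv_le_one_iff₀]; right; push_cast; linarith
  have hset : Set.Ioc (a n) δ ∩ Set.Ioo 0 δ = Set.Ioo (a n) δ := by
    ext x
    constructor
    · rintro ⟨⟨h1, h2⟩, ⟨h3, h4⟩⟩; exact ⟨h1, h4⟩
    · rintro ⟨h1, h2⟩; exact ⟨⟨h1, h2.le⟩, ⟨hn0.trans h1, h2⟩⟩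
  rw [Measure.restrict_restrict measurableSet_Ioc, hset,
    ← integral_Ioc_eq_integral_Ioo,
    ← intervalIntegral.integral_of_le hnle,
    integral_log]
  have : a n * Real.log (a n) - a n ≤ 0 := by
    have := mul_nonpos_of_nonneg_of_nonpos hn0.le (Real.log_nonpos hn0.le hn1)
    linarith
  linarith

end EntropyAux

open Set Real Filter Topology in
/-- Lemma B.4: entropy-integral bound
`∫₀^δ √(log((δ+1)√r/ε)) dε ≤ C δ max(log(1/δ), log r, 1)`. -/
theorem entropy_integral_bound :
    ∃ C : ℝ, 0 < C ∧ ∀ δ : ℝ, 0 < δ → ∀ r : ℝ, 1 ≤ r →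
      (∫ ε in Set.Ioo (0:ℝ) δ, Real.sqrt (Real.log ((δ + 1) * Real.sqrt r / ε)))
        ≤ C * δ * max (max (Real.log (1 / δ)) (Real.log r)) 1 := by
  refine ⟨3, by norm_num, fun δ hδ r hr => ?_⟩
  set A : ℝ := (δ + 1) * Real.sqrt r with hA
  set M : ℝ := max (max (Real.log (1 / δ)) (Real.log r)) 1 with hM
  have hM1 : 1 ≤ M := le_max_right _ _
  have hMld : Real.log (1 / δ) ≤ M := le_trans (le_max_left _ _) (le_max_left _ _)
  have hMlr : Real.log r ≤ M := le_trans (le_max_right _ _) (le_max_left _ _)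
  have hr0 : (0:ℝ) < r := lt_of_lt_of_le one_pos hr
  have hsr : 1 ≤ Real.sqrt r := by
    rw [show (1:ℝ) = Real.sqrt 1 by simp]
    exact Real.sqrt_le_sqrt hr
  have hδA : δ < A := by
    calc δ < δ + 1 := by linarith
    _ = (δ + 1) * 1 := by ring
    _ ≤ A := by rw [hA]; exact mul_le_mul_of_nonneg_left hsr (by linarith)
  have hA0 : (0:ℝ) < A := hδ.trans hδA
  -- the dominating function
  set g : ℝ → ℝ := fun ε => ((1 + Real.log A) - Real.log ε) / 2 with hg
  have hg_int : IntegrableOn g (Set.Ioo 0 δ) := by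
    apply Integrable.div_const
    apply Integrable.sub (integrableOn_const (C := 1 + Real.log A) measure_Ioo_lt_top.ne)
    exact (aux_integrableOn_log_Ioc hδ).mono_set Set.Ioo_subset_Ioc_self
  have hbound : ∀ ε ∈ Set.Ioo (0:ℝ) δ, Real.sqrt (Real.log (A / ε)) ≤ g ε := by
    intro ε hε
    have hε0 : (0:ℝ) < ε := hε.1
    have h1le : 1 ≤ A / ε := (one_le_div hε0).mpr (le_of_lt (hε.2.trans hδA))
    have hlog0 : 0 ≤ Real.log (A / ε) := Real.log_nonneg h1le
    have hsq : Real.sqrt (Real.log (A / ε)) ≤ (1 + Real.log (A / ε)) / 2 := by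
      have h := sq_nonneg (Real.sqrt (Real.log (A / ε)) - 1)
      have h2 := Real.sq_sqrt hlog0
      nlinarith
    have hdiv : Real.log (A / ε) = Real.log A - Real.log ε :=
      Real.log_div (ne_of_gt hA0) (ne_of_gt hε0)
    rw [hg]; simp only []
    rw [hdiv] at hsq ⊢
    linarith
  have hf_meas : AEStronglyMeasurable (fun ε => Real.sqrt (Real.log (A / ε)))
      (volume.restrict (Set.Ioo 0 δ)) :=
    (Real.continuous_sqrt.measurable.comp
      (Real.measurable_log.comp (measurable_const.div measurable_id))).aestronglyMeasurable
  have hf_int : IntegrableOn (fun ε => Real.sqrt (Real.log (A / ε))) (Set.Ioo 0 δ) := by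
    apply Integrable.mono' hg_int hf_meas
    filter_upwards [ae_restrict_mem measurableSet_Ioo] with ε hε
    rw [Real.norm_eq_abs, abs_of_nonneg (Real.sqrt_nonneg _)]
    exact hbound ε hε
  have hmono : (∫ ε in Set.Ioo (0:ℝ) δ, Real.sqrt (Real.log (A / ε)))
      ≤ ∫ ε in Set.Ioo (0:ℝ) δ, g ε :=
    setIntegral_mono_on hf_int hg_int measurableSet_Ioo hbound
  -- compute/bound the integral of g
  have hgval : (∫ ε in Set.Ioo (0:ℝ) δ, g ε)
      ≤ (δ * (1 + Real.log A) - (δ * Real.log δ - δ)) / 2 := by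
    have hsplit : (∫ ε in Set.Ioo (0:ℝ) δ, g ε)
        = ((∫ _ε in Set.Ioo (0:ℝ) δ, (1 + Real.log A))
            - ∫ ε in Set.Ioo (0:ℝ) δ, Real.log ε) / 2 := by
      rw [hg]
      rw [← integral_sub (integrableOn_const (C := 1 + Real.log A) measure_Ioo_lt_top.ne)
        ((aux_integrableOn_log_Ioc hδ).mono_set Set.Ioo_subset_Ioc_self)]
      rw [← integral_div]
    rw [hsplit, setIntegral_const, measureReal_def, Real.volume_Ioo]
    have hvol : (ENNReal.ofReal (δ - 0)).toReal = δ := by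
      rw [ENNReal.toReal_ofReal (by linarith)]; ring
    rw [hvol]
    have := aux_log_integral_lb hδ
    simp only [smul_eq_mul]
    linarith
  -- final algebra
  have hfinal : (δ * (1 + Real.log A) - (δ * Real.log δ - δ)) / 2 ≤ 3 * δ * M := by
    have hlogA : Real.log A = Real.log (δ + 1) + Real.log r / 2 := by
      rw [hA, Real.log_mul (by linarith) (by positivity), Real.log_sqrt hr0.le]
    have hld : -Real.log δ = Real.log (1 / δ) := by
      rw [one_div, Real.log_inv]
    have hkey : Real.log (δ + 1) - Real.log δ ≤ 2 * M := by
      have hq : Real.log (δ + 1) - Real.log δ = Real.log ((δ + 1) / δ) :=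
        (Real.log_div (by linarith) (ne_of_gt hδ)).symm
      have hlog2 : Real.log 2 ≤ 1 := by
        have := Real.log_le_sub_one_of_pos (show (0:ℝ) < 2 by norm_num)
        linarith
      rcases le_total δ 1 with h | h
      · -- δ ≤ 1 : (δ+1)/δ ≤ 2/δ
        have h2 : (δ + 1) / δ ≤ 2 / δ := by
          gcongr
          linarith
        have h3 : Real.log ((δ + 1) / δ) ≤ Real.log (2 / δ) :=
          Real.log_le_log (by positivity) h2
        have h4 : Real.log (2 / δ) = Real.log 2 + Real.log (1 / δ) := by
          rw [Real.log_div (by norm_num) (ne_of_gt hδ), one_div, Real.log_inv]; ring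
        rw [hq]
        calc Real.log ((δ + 1) / δ) ≤ Real.log 2 + Real.log (1 / δ) := by rw [← h4]; exact h3
        _ ≤ 1 + M := by linarith
        _ ≤ 2 * M := by linarith
      · -- 1 ≤ δ : (δ+1)/δ ≤ 2
        have h2 : (δ + 1) / δ ≤ 2 := by
          rw [div_le_iff₀ hδ]; linarith
        have h3 : Real.log ((δ + 1) / δ) ≤ Real.log 2 :=
          Real.log_le_log (by positivity) h2
        rw [hq]
        linarith
    have hM0 : 0 < M := lt_of_lt_of_le one_pos hM1
    have : δ * (1 + Real.log A) - (δ * Real.log δ - δ)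
        = δ * (2 + (Real.log (δ + 1) - Real.log δ) + Real.log r / 2) := by
      rw [hlogA]; ring
    rw [this]
    have hin : 2 + (Real.log (δ + 1) - Real.log δ) + Real.log r / 2 ≤ 6 * M := by
      linarith
    calc δ * (2 + (Real.log (δ + 1) - Real.log δ) + Real.log r / 2) / 2
        ≤ δ * (6 * M) / 2 := by
          nlinarith [mul_le_mul_of_nonneg_left hin hδ.le]
      _ = 3 * δ * M := by ring
  calc (∫ ε in Set.Ioo (0:ℝ) δ, Real.sqrt (Real.log ((δ + 1) * Real.sqrt r / ε)))
      ≤ ∫ ε in Set.Ioo (0:ℝ) δ, g ε := hmono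
    _ ≤ (δ * (1 + Real.log A) - (δ * Real.log δ - δ)) / 2 := hgval
    _ ≤ 3 * δ * M := hfinal
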